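/- arXiv:1805.02640 — 6 statements merged into one kernel-verified Lean document; each statement's English description precedes it below -/
import Mathlib

section
/- Let Φ ∈ ℝ^{np×n} be (n-stacked) q-error detectable, let x ∈ ℝⁿ, e ∈ Σ_qⁿ, and ẑ = Φx + e. Define the residual r = ẑ − ΦΦ†ẑ, where Φ† is the Moore–Penrose pseudoinverse of Φ. Then e = 0 if and only if r = 0; moreover, when e = 0 the vector x is exactly recovered as x = Φ†ẑ. -/
open scoped Classical
open Finset Matrix

noncomputable section

namespace SecureEst

variable {n p : ℕ}

/-- The `i`-th `n`-block of an `n`-stacked vector. -/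
def blk (z : Fin p × Fin n → ℝ) (i : Fin p) : Fin n → ℝ := fun j => z (i, j)

/-- The `n`-stacked support of a stacked vector. -/
def blockSupp (z : Fin p × Fin n → ℝ) : Finset (Fin p) :=
  Finset.univ.filter fun i => blk z i ≠ 0

/-- The `n`-stacked ℓ⁰ "norm": number of nonzero blocks. -/
def l0n (z : Fin p × Fin n → ℝ) : ℕ := (blockSupp z).card

/-- `n`-stacked `q`-sparsity: membership in `Σ_qⁿ`. -/
def Sparse (q : ℕ) (z : Fin p × Fin n → ℝ) : Prop := l0n z ≤ q

/-- Euclidean (ℓ²) norm of a real vector. -/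
def enorm {m : Type*} [Fintype m] (x : m → ℝ) : ℝ := Real.sqrt (∑ i, x i ^ 2)

/-- `Φ_{Λⁿ}`: zero out the row-blocks of `Φ` outside `Λ`. -/
def zeroB (Λ : Finset (Fin p)) (Φ : Matrix (Fin p × Fin n) (Fin n) ℝ) :
    Matrix (Fin p × Fin n) (Fin n) ℝ :=
  fun ij k => if ij.1 ∈ Λ then Φ ij k else 0

/-- `z_{Λⁿ}`: zero out the blocks of a stacked vector outside `Λ`. -/
def zeroV (Λ : Finset (Fin p)) (z : Fin p × Fin n → ℝ) : Fin p × Fin n → ℝ :=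
  fun ij => if ij.1 ∈ Λ then z ij else 0

/-- `Φ_{Γᵢⁿ}`: the `i`-th row-block of `Φ`. -/
def rowBlk (Φ : Matrix (Fin p × Fin n) (Fin n) ℝ) (i : Fin p) :
    Matrix (Fin n) (Fin n) ℝ := fun j k => Φ (i, j) k

/-- Moore–Penrose pseudoinverse (full-column-rank formula `(MᵀM)⁻¹Mᵀ`). -/
def pinv {m k : Type*} [Fintype m] [Fintype k] [DecidableEq k]
    (M : Matrix m k ℝ) : Matrix k m ℝ := (Mᵀ * M)⁻¹ * Mᵀ

/-- Spectral norm (largest singular value) of a real matrix. -/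
def specNorm {m k : Type*} [Fintype m] [Fintype k] (M : Matrix m k ℝ) : ℝ :=
  sSup {r | ∃ x : k → ℝ, enorm x = 1 ∧ r = enorm (M.mulVec x)}

/-- Minimum singular value of a (tall) real matrix. -/
def sigmaMin {m k : Type*} [Fintype m] [Fintype k] (M : Matrix m k ℝ) : ℝ :=
  sInf {r | ∃ x : k → ℝ, enorm x = 1 ∧ r = enorm (M.mulVec x)}

/-- `(n-stacked) q`-error detectability. -/
def ErrDetectable (Φ : Matrix (Fin p × Fin n) (Fin n) ℝ) (q : ℕ) : Prop :=
  ∀ x x' : Fin n → ℝ, ∀ e : Fin p × Fin n → ℝ,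
    Sparse q e → Φ.mulVec x + e = Φ.mulVec x' → x = x'

/-- `(n-stacked) q`-error correctability. -/
def ErrCorrectable (Φ : Matrix (Fin p × Fin n) (Fin n) ℝ) (q : ℕ) : Prop :=
  ∀ x₁ x₂ : Fin n → ℝ, ∀ e₁ e₂ : Fin p × Fin n → ℝ,
    Sparse q e₁ → Sparse q e₂ →
      Φ.mulVec x₁ + e₁ = Φ.mulVec x₂ + e₂ → x₁ = x₂

/-- `(n-stacked)` cospark. -/
def cosparkN (Φ : Matrix (Fin p × Fin n) (Fin n) ℝ) : ℕ :=
  sInf {m : ℕ | ∃ x : Fin n → ℝ, x ≠ 0 ∧ m = l0n (Φ.mulVec x)}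

/-- `ρ_{p,q}(Φ)`. -/
def rho (Φ : Matrix (Fin p × Fin n) (Fin n) ℝ) (q : ℕ) : ℝ :=
  sInf {r | ∃ Λ : Finset (Fin p), Λ.card = p - q ∧ r = sigmaMin (zeroB Λ Φ)}

/-- `η_{p,q}(Φ)`. -/
def eta (Φ : Matrix (Fin p × Fin n) (Fin n) ℝ) (q : ℕ) : ℝ :=
  sSup {r | ∃ Λ : Finset (Fin p), Λ.card = p - q ∧
    ∃ i : Fin p, i ∉ Λ ∧ r = specNorm (rowBlk Φ i * pinv (zeroB Λ Φ))}

/-- `κ^d_{p,q}(Φ)`. -/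
def kappaD (Φ : Matrix (Fin p × Fin n) (Fin n) ℝ) (q : ℕ) : ℝ :=
  (Real.sqrt (p : ℝ) + 1) * Real.sqrt ((p - q : ℕ) : ℝ) / rho Φ q

/-- `κ^e_{p,q}(Φ)`. -/
def kappaE (Φ : Matrix (Fin p × Fin n) (Fin n) ℝ) (q : ℕ) : ℝ :=
  (eta Φ q * Real.sqrt ((p - q : ℕ) : ℝ) + 1) * (Real.sqrt (p : ℝ) + 1)

/-- The finite candidate set `F_{p,r}(ẑ)`. -/
def Fset (Φ : Matrix (Fin p × Fin n) (Fin n) ℝ) (r : ℕ) (z : Fin p × Fin n → ℝ) :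
    Set (Fin n → ℝ) :=
  {χ | ∃ Λ : Finset (Fin p), Λ.card = p - r ∧
    χ = (pinv (zeroB Λ Φ)).mulVec (zeroV Λ z)}

/-- `η'_{p,q,r}(Φ)`. -/
def eta' (Φ : Matrix (Fin p × Fin n) (Fin n) ℝ) (q r : ℕ) : ℝ :=
  sSup {a | ∃ Λ : Finset (Fin p), Λ.card = p - q ∧
    a = sInf {b | ∃ Λ' : Finset (Fin p), Λ' ⊆ Λ ∧ Λ'.card = p - r ∧
      b = sSup {c | ∃ i ∈ Λ \ Λ',
        c = specNorm (rowBlk Φ i * pinv (zeroB Λ' Φ))}}}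

/-- `ϑ_{p,q,r}(Φ)`. -/
def theta (Φ : Matrix (Fin p × Fin n) (Fin n) ℝ) (q r : ℕ) : ℝ :=
  max (eta' Φ q r * Real.sqrt ((p - r : ℕ) : ℝ) + 1) (Real.sqrt ((p - r : ℕ) : ℝ))

/-- `κ^c_{p,q,r}(Φ)`. -/
def kappaC (Φ : Matrix (Fin p × Fin n) (Fin n) ℝ) (q r : ℕ) : ℝ :=
  (theta Φ q r + 1) * Real.sqrt ((p - 2 * q : ℕ) : ℝ) / rho Φ (2 * q)

/-- `κ^{c'}_{p,q,r}(Φ)`. -/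
def kappaC' (Φ : Matrix (Fin p × Fin n) (Fin n) ℝ) (q r : ℕ) : ℝ :=
  (theta Φ q r - 1) / sSup {c | ∃ i : Fin p, c = specNorm (rowBlk Φ i)}

/-- Stacked observability matrix `G` with row-blocks `Gᵢ = [cᵢᵀ (cᵢA)ᵀ ⋯ (cᵢAⁿ⁻¹)ᵀ]ᵀ`. -/
def obsG (A : Matrix (Fin n) (Fin n) ℝ) (C : Matrix (Fin p) (Fin n) ℝ) :
    Matrix (Fin p × Fin n) (Fin n) ℝ :=
  fun ij k => (C * A ^ (ij.2 : ℕ)) ij.1 k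

/-- `C_Λ`: zero out the rows of `C` outside `Λ`. -/
def zeroRows (Λ : Finset (Fin p)) (C : Matrix (Fin p) (Fin n) ℝ) :
    Matrix (Fin p) (Fin n) ℝ :=
  fun i k => if i ∈ Λ then C i k else 0

/-- Observability of the pair `(A, C)`: the observability matrix has full column rank. -/
def Observable (A : Matrix (Fin n) (Fin n) ℝ) (C : Matrix (Fin p) (Fin n) ℝ) : Prop :=
  (obsG A C).rank = n

/-- `q`-redundant observability. -/
def RedObservable (A : Matrix (Fin n) (Fin n) ℝ) (C : Matrix (Fin p) (Fin n) ℝ)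
    (q : ℕ) : Prop :=
  ∀ Λ : Finset (Fin p), p - q ≤ Λ.card → Observable A (zeroRows Λ C)

/-- Euclidean norm of a complex vector. -/
def enormC {m : Type*} [Fintype m] (v : m → ℂ) : ℝ :=
  Real.sqrt (∑ i, ‖v i‖ ^ 2)

/-- The set `V(A)` of normalized complex eigenvectors of a real matrix `A`. -/
def eigSet (A : Matrix (Fin n) (Fin n) ℝ) : Set (Fin n → ℂ) :=
  {v | (∃ μ : ℂ, (A.map Complex.ofReal).mulVec v = μ • v) ∧ enormC v = 1}

/-- ℓ⁰ norm of a complex vector. -/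
def l0C (y : Fin p → ℂ) : ℕ := (Finset.univ.filter fun i => y i ≠ 0).card

/-- `n`-stacked ℓ⁰ norm of a complex stacked vector. -/
def l0nC (z : Fin p × Fin n → ℂ) : ℕ :=
  (Finset.univ.filter fun i => (fun j => z (i, j)) ≠ (0 : Fin n → ℂ)).card

/-- The dynamic security index `α_d(A, C)`. -/
def alphaD (A : Matrix (Fin n) (Fin n) ℝ) (C : Matrix (Fin p) (Fin n) ℝ) : ℕ :=
  sInf {m : ℕ | ∃ v ∈ eigSet A, m = l0C ((C.map Complex.ofReal).mulVec v)}

end SecureEst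
open SecureEst in
/-- Lemma 1: with noiseless measurement `zhat = Φx + e` and residual
`r = zhat − ΦΦ†zhat`, one has `e = 0 ↔ r = 0`; and when `e = 0`, `x = Φ†zhat`. -/
theorem residual_detection_noiseless {n p : ℕ}
    (Φ : Matrix (Fin p × Fin n) (Fin n) ℝ) (q : ℕ)
    (hdet : ErrDetectable Φ q)
    (x : Fin n → ℝ) (e : Fin p × Fin n → ℝ) (he : Sparse q e)
    (zhat r : Fin p × Fin n → ℝ)
    (hz : zhat = Φ.mulVec x + e)
    (hr : r = zhat - Φ.mulVec ((pinv Φ).mulVec zhat)) :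
    (e = 0 ↔ r = 0) ∧ (e = 0 → x = (pinv Φ).mulVec zhat) := by
  have hsp0 : Sparse q (0 : Fin p × Fin n → ℝ) := by
    have : blockSupp (0 : Fin p × Fin n → ℝ) = ∅ := by
      rw [blockSupp, Finset.filter_eq_empty_iff]
      intro i _
      simp only [ne_eq, not_not]
      rfl
    simp [Sparse, l0n, this]
  have hinj : Function.Injective Φ.mulVec := by
    intro a b h
    exact hdet a b 0 hsp0 (by simp [h])
  have hGraminj : Function.Injective (Φᵀ * Φ).mulVec := by
    intro a b h
    apply hinj
    have hker : Φ.mulVec (a - b) = 0 := by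
      have h0 : (Φᵀ * Φ).mulVec (a - b) = 0 := by
        rw [Matrix.mulVec_sub, h, sub_self]
      have hdot : (a - b) ⬝ᵥ (Φᵀ * Φ).mulVec (a - b) = 0 := by
        rw [h0, dotProduct_zero]
      rw [← Matrix.mulVec_mulVec, Matrix.dotProduct_mulVec,
        Matrix.vecMul_transpose] at hdot
      have := (dotProduct_self_eq_zero (v := Φ.mulVec (a - b))).mp hdot
      exact this
    have := congrArg (· + Φ.mulVec b) (Matrix.mulVec_sub Φ a b ▸ hker)
    simpa [sub_add_cancel] using this
  have hunit : IsUnit (Φᵀ * Φ) := Matrix.mulVec_injective_iff_isUnit.mp hGraminj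
  have hdetu : IsUnit (Φᵀ * Φ).det := (Matrix.isUnit_iff_isUnit_det _).mp hunit
  have hpinv : ∀ y : Fin n → ℝ, (pinv Φ).mulVec (Φ.mulVec y) = y := by
    intro y
    rw [pinv, Matrix.mulVec_mulVec, Matrix.mul_assoc, Matrix.nonsing_inv_mul _ hdetu,
      Matrix.one_mulVec]
  constructor
  · constructor
    · intro he0
      subst he0
      rw [hr, hz]
      simp only [add_zero]
      rw [hpinv x, sub_self]
    · intro hr0
      have h2 : zhat = Φ.mulVec ((pinv Φ).mulVec zhat) :=
        sub_eq_zero.mp (hr ▸ hr0)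
      have hzz : Φ.mulVec x + e = Φ.mulVec ((pinv Φ).mulVec zhat) := hz ▸ h2
      have hx : x = (pinv Φ).mulVec zhat := hdet _ _ e he hzz
      have : Φ.mulVec x + e = Φ.mulVec x := by rw [hx] at hzz ⊢; exact hzz
      exact add_eq_left.mp this
  · intro he0
    subst he0
    rw [hz]
    simp only [add_zero]
    exact (hpinv x).symm
end
end

section
/- Let Φ ∈ ℝ^{np×n} be (n-stacked) q-error detectable, let x ∈ ℝⁿ, e ∈ Σ_qⁿ, and v ∈ ℝ^{np} with ‖v_i‖₂ ≤ v_max for every block i ∈ {1,…,p}, and let ẑ = Φx + v + e. Define x̂ = Φ†ẑ and r = ẑ − Φx̂. If ‖r_i‖₂ > √p · v_max for some i ∈ {1,…,p}, then e ≠ 0. -/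
open scoped Classical
open Finset Matrix

noncomputable section

open SecureEst in
/-- Theorem 1.(i): with `zhat = Φx + v + e`, `xhat = Φ†zhat`, `r = zhat − Φxhat`,
if some residual block satisfies `‖rᵢ‖₂ > √p · v_max`, then `e ≠ 0`. -/
theorem residual_detection_noisy_attack {n p : ℕ}
    (Φ : Matrix (Fin p × Fin n) (Fin n) ℝ) (q : ℕ)
    (hdet : ErrDetectable Φ q)
    (x : Fin n → ℝ) (e v : Fin p × Fin n → ℝ) (vmax : ℝ)
    (he : Sparse q e) (hv : ∀ i : Fin p, SecureEst.enorm (blk v i) ≤ vmax)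
    (zhat : Fin p × Fin n → ℝ) (xhat : Fin n → ℝ) (r : Fin p × Fin n → ℝ)
    (hz : zhat = Φ.mulVec x + v + e)
    (hxhat : xhat = (pinv Φ).mulVec zhat)
    (hr : r = zhat - Φ.mulVec xhat)
    (hres : ∃ i : Fin p, Real.sqrt (p : ℝ) * vmax < SecureEst.enorm (blk r i)) :
    e ≠ 0 := by
  classical
  intro he0
  subst he0
  obtain ⟨i, hi⟩ := hres
  have hvmax : 0 ≤ vmax := le_trans (Real.sqrt_nonneg _) (hv i)
  have hsp0 : Sparse q (0 : Fin p × Fin n → ℝ) := by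
    have hb : ∀ k : Fin p, blk (0 : Fin p × Fin n → ℝ) k = 0 := fun _ => rfl
    simp [Sparse, l0n, blockSupp, hb]
  have hinj : Function.Injective Φ.mulVec := by
    intro a b hab
    exact hdet a b 0 hsp0 (by simpa using hab)
  have hGinj : Function.Injective (Φᵀ * Φ).mulVec := by
    intro a b hab
    apply hinj
    set y := a - b with hy
    have hG0 : (Φᵀ * Φ).mulVec y = 0 := by
      rw [hy, Matrix.mulVec_sub, hab, sub_self]
    have h0 : Φ.mulVec y ⬝ᵥ Φ.mulVec y = 0 := by
      rw [Matrix.dotProduct_mulVec, ← Matrix.mulVec_transpose,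
        Matrix.mulVec_mulVec, hG0, zero_dotProduct]
    have hΦy : Φ.mulVec y = 0 := by
      funext ij
      have hnn := (Finset.sum_eq_zero_iff_of_nonneg
        (fun k _ => mul_self_nonneg (Φ.mulVec y k))).mp h0 ij (Finset.mem_univ ij)
      simpa using mul_self_eq_zero.mp hnn
    have hz0 : Φ.mulVec a - Φ.mulVec b = 0 := by
      rw [← Matrix.mulVec_sub, ← hy, hΦy]
    exact sub_eq_zero.mp hz0
  have hGunit : IsUnit (Φᵀ * Φ) := Matrix.mulVec_injective_iff_isUnit.mp hGinj
  have hpinvΦ : pinv Φ * Φ = 1 := by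
    rw [pinv, Matrix.mul_assoc, Matrix.nonsing_inv_mul _ ((Matrix.isUnit_iff_isUnit_det _).mp hGunit)]
  set P : Matrix (Fin p × Fin n) (Fin p × Fin n) ℝ := Φ * pinv Φ with hP
  have hPsymm : Pᵀ = P := by
    rw [hP, pinv, Matrix.transpose_mul, Matrix.transpose_mul,
      Matrix.transpose_nonsing_inv, Matrix.transpose_mul,
      Matrix.transpose_transpose, Matrix.mul_assoc]
  have hPidem : P * P = P := by
    rw [hP, Matrix.mul_assoc, ← Matrix.mul_assoc (pinv Φ), hpinvΦ,
      Matrix.one_mul]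
  set w := P.mulVec v with hw
  have hr' : r = v - w := by
    rw [hr, hz, hxhat, hz]
    simp only [add_zero, Matrix.mulVec_add, Matrix.mulVec_mulVec,
      ← Matrix.mul_assoc, ← hP]
    have h1 : (P * Φ).mulVec x = Φ.mulVec x := by
      rw [hP, Matrix.mul_assoc, hpinvΦ, Matrix.mul_one]
    rw [h1, ← hw]
    abel
  have hvw : v ⬝ᵥ w = w ⬝ᵥ w := by
    have h1 : w ⬝ᵥ w = (Pᵀ * P).mulVec v ⬝ᵥ v := by
      rw [hw, Matrix.dotProduct_mulVec, ← Matrix.mulVec_transpose,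
        Matrix.mulVec_mulVec]
    rw [h1, hPsymm, hPidem, ← hw, dotProduct_comm]
  have key : ∑ ij, v ij * w ij = ∑ ij, w ij * w ij := hvw
  have hww : (0:ℝ) ≤ ∑ ij, w ij * w ij :=
    Finset.sum_nonneg fun k _ => mul_self_nonneg _
  have hsum : ∑ ij, r ij ^ 2 ≤ ∑ ij, v ij ^ 2 := by
    have hterm : ∀ ij, r ij ^ 2 =
        v ij ^ 2 - 2 * (v ij * w ij) + w ij * w ij := by
      intro ij
      rw [hr']
      simp only [Pi.sub_apply]
      ring
    calc ∑ ij, r ij ^ 2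
        = ∑ ij, (v ij ^ 2 - 2 * (v ij * w ij) + w ij * w ij) :=
          Finset.sum_congr rfl fun ij _ => hterm ij
      _ = ∑ ij, v ij ^ 2 - 2 * ∑ ij, v ij * w ij + ∑ ij, w ij * w ij := by
          rw [Finset.sum_add_distrib, Finset.sum_sub_distrib, Finset.mul_sum]
      _ = ∑ ij, v ij ^ 2 - ∑ ij, w ij * w ij := by rw [key]; ring
      _ ≤ ∑ ij, v ij ^ 2 := by linarith
  have h1 : ∑ j, r (i, j) ^ 2 ≤ ∑ ij, r ij ^ 2 := by
    rw [Fintype.sum_prod_type]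
    exact Finset.single_le_sum
      (f := fun i => ∑ j, r (i, j) ^ 2)
      (fun k _ => Finset.sum_nonneg fun j _ => sq_nonneg _) (Finset.mem_univ i)
  have h2 : ∑ ij, v ij ^ 2 ≤ (p : ℝ) * vmax ^ 2 := by
    rw [Fintype.sum_prod_type]
    calc ∑ k, ∑ j, v (k, j) ^ 2 ≤ ∑ _k : Fin p, vmax ^ 2 := by
          apply Finset.sum_le_sum
          intro k _
          have h3 : SecureEst.enorm (blk v k) ^ 2 ≤ vmax ^ 2 :=
            pow_le_pow_left₀ (Real.sqrt_nonneg _) (hv k) 2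
          rwa [SecureEst.enorm, Real.sq_sqrt (Finset.sum_nonneg fun j _ => sq_nonneg _)]
            at h3
      _ = (p : ℝ) * vmax ^ 2 := by simp [mul_comm]
  have hfin : SecureEst.enorm (blk r i) ≤ Real.sqrt (p : ℝ) * vmax := by
    rw [SecureEst.enorm]
    have : ∑ j, blk r i j ^ 2 ≤ (p : ℝ) * vmax ^ 2 :=
      le_trans (le_trans h1 hsum) h2
    calc Real.sqrt (∑ j, blk r i j ^ 2)
        ≤ Real.sqrt ((p : ℝ) * vmax ^ 2) := Real.sqrt_le_sqrt this
      _ = Real.sqrt (p : ℝ) * vmax := by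
          rw [Real.sqrt_mul (Nat.cast_nonneg p), Real.sqrt_sq hvmax]
  linarith
end
end

section
/- Let Φ ∈ ℝ^{np×n} be (n-stacked) q-error correctable, x ∈ ℝⁿ, e ∈ Σ_qⁿ, and ẑ = Φx + e. Let r be any integer with q ≤ r ≤ 2q, and define the finite set F_{p,r}(ẑ) := {(Φ_{Λⁿ})†ẑ_{Λⁿ} ∈ ℝⁿ : Λ ⊆ {1,…,p}, |Λ| = p−r}. Then x belongs to F_{p,r}(ẑ) and x is the unique minimizer over χ ∈ F_{p,r}(ẑ) of ‖ẑ − Φχ‖_{0ⁿ}; equivalently, x is the unique minimizer over χ ∈ F_{p,r}(ẑ) of the number of indices i ∈ {1,…,p} with ‖ẑ_i − Φ_{Γᵢⁿ}χ‖₂ > 0. -/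
open scoped Classical
open Finset Matrix

noncomputable section

section Aux
open SecureEst

variable {n p : ℕ}

private lemma blk_eq_zero_of_not_mem {z : Fin p × Fin n → ℝ} {i : Fin p}
    (h : i ∉ blockSupp z) : blk z i = 0 := by
  by_contra h0
  exact h (Finset.mem_filter.mpr ⟨Finset.mem_univ _, h0⟩)

private lemma blockSupp_subset {z : Fin p × Fin n → ℝ} {S : Finset (Fin p)}
    (h : ∀ i ∉ S, blk z i = 0) : blockSupp z ⊆ S := by
  intro i hi
  by_contra hiS
  exact (Finset.mem_filter.mp hi).2 (h i hiS)

private lemma blk_mulVec (Φ : Matrix (Fin p × Fin n) (Fin n) ℝ) (χ : Fin n → ℝ)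
    (i : Fin p) : blk (Φ.mulVec χ) i = (rowBlk Φ i).mulVec χ := rfl

/-- Correctability implies every nonzero `y` has more than `2q` nonzero blocks in `Φ y`. -/
private lemma detect {Φ : Matrix (Fin p × Fin n) (Fin n) ℝ} {q : ℕ}
    (hc : ErrCorrectable Φ q) {y : Fin n → ℝ} (hy : y ≠ 0) :
    2 * q < l0n (Φ.mulVec y) := by
  by_contra hle
  push_neg at hle
  set w := Φ.mulVec y with hw
  set S := blockSupp w with hS
  obtain ⟨S₁, hS₁sub, hS₁card⟩ := Finset.exists_subset_card_eq (min_le_left S.card q)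
  set S₂ := S \ S₁ with hS₂
  have hcard2 : S₂.card = S.card - S₁.card := Finset.card_sdiff_of_subset hS₁sub
  set e₁ : Fin p × Fin n → ℝ := fun ij => if ij.1 ∈ S₁ then -(w ij) else 0 with he₁
  set e₂ : Fin p × Fin n → ℝ := fun ij => if ij.1 ∈ S₂ then w ij else 0 with he₂
  have hsp1 : Sparse q e₁ := by
    have hsub : blockSupp e₁ ⊆ S₁ := blockSupp_subset (by
      intro i hiS
      funext j
      simp [he₁, blk, hiS])
    have := Finset.card_le_card hsub
    unfold Sparse l0n
    omega
  have hsp2 : Sparse q e₂ := by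
    have hsub : blockSupp e₂ ⊆ S₂ := blockSupp_subset (by
      intro i hiS
      funext j
      simp [he₂, blk, hiS])
    have := Finset.card_le_card hsub
    have hSle : S.card ≤ 2 * q := hle
    unfold Sparse l0n
    omega
  have heq : Φ.mulVec y + e₁ = Φ.mulVec 0 + e₂ := by
    funext ij
    have h0 : Φ.mulVec (0 : Fin n → ℝ) = 0 := Matrix.mulVec_zero Φ
    simp only [Pi.add_apply, h0, Pi.zero_apply, zero_add, ← hw, he₁, he₂]
    by_cases h1 : ij.1 ∈ S₁
    · have h2 : ij.1 ∉ S₂ := by simp [hS₂, h1]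
      simp [h1, h2]
    · by_cases hSmem : ij.1 ∈ S
      · have h2 : ij.1 ∈ S₂ := Finset.mem_sdiff.mpr ⟨hSmem, h1⟩
        simp [h1, h2]
      · have hblk : blk w ij.1 = 0 := blk_eq_zero_of_not_mem hSmem
        have hwij : w ij = 0 := by
          have := congrFun hblk ij.2
          simpa [blk] using this
        have h2 : ij.1 ∉ S₂ := fun hmem => hSmem (Finset.mem_sdiff.mp hmem).1
        simp [h1, h2, hwij]
  exact hy (hc y 0 e₁ e₂ hsp1 hsp2 heq)

private lemma x_mem_Fset {Φ : Matrix (Fin p × Fin n) (Fin n) ℝ} {q r : ℕ}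
    (hc : ErrCorrectable Φ q) (hqr : q ≤ r) (hr2q : r ≤ 2 * q)
    {x : Fin n → ℝ} {e : Fin p × Fin n → ℝ} (he : Sparse q e)
    {zhat : Fin p × Fin n → ℝ} (hz : zhat = Φ.mulVec x + e) :
    x ∈ Fset Φ r zhat := by
  have hecard : (blockSupp e).card ≤ q := he
  have hcompl : (blockSupp e)ᶜ.card = p - (blockSupp e).card := by
    rw [Finset.card_compl, Fintype.card_fin]
  have hle : p - r ≤ (blockSupp e)ᶜ.card := by
    have := (blockSupp e).card_le_univ
    simp only [Finset.card_univ, Fintype.card_fin] at this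
    omega
  obtain ⟨Λ, hΛsub, hΛcard⟩ := Finset.exists_subset_card_eq hle
  refine ⟨Λ, hΛcard, ?_⟩
  set M := zeroB Λ Φ with hM
  have hMV : ∀ (y : Fin n → ℝ) (ij : Fin p × Fin n),
      M.mulVec y ij = if ij.1 ∈ Λ then Φ.mulVec y ij else 0 := by
    intro y ij
    by_cases h : ij.1 ∈ Λ <;>
      simp [hM, zeroB, Matrix.mulVec, dotProduct, h]
  have hMx : zeroV Λ zhat = M.mulVec x := by
    funext ij
    rw [hMV]
    by_cases h : ij.1 ∈ Λ
    · have hie : ij.1 ∉ blockSupp e := by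
        have := hΛsub h
        simpa using this
      have he0 : e ij = 0 := by
        have := congrFun (blk_eq_zero_of_not_mem hie) ij.2
        simpa [blk] using this
      simp [zeroV, h, hz, he0]
    · simp [zeroV, h]
  -- M has trivial kernel
  have hker : ∀ y : Fin n → ℝ, M.mulVec y = 0 → y = 0 := by
    intro y hy
    by_contra hy0
    have h2q := detect hc hy0
    have hsub : blockSupp (Φ.mulVec y) ⊆ Λᶜ := by
      intro i hi
      rw [Finset.mem_compl]
      intro hiΛ
      refine (Finset.mem_filter.mp hi).2 ?_
      funext j
      have h1 := congrFun hy (i, j)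
      rw [hMV] at h1
      simp only [hiΛ, if_true, Pi.zero_apply] at h1
      simpa [blk] using h1
    have hcard : l0n (Φ.mulVec y) ≤ p - (p - r) := by
      have := Finset.card_le_card hsub
      have h2 : Λᶜ.card = p - Λ.card := by
        rw [Finset.card_compl, Fintype.card_fin]
      unfold l0n
      omega
    omega
  have hinj : Function.Injective (Mᵀ * M).mulVec := by
    intro a b hab
    have hsub0 : (Mᵀ * M).mulVec (a - b) = 0 := by
      rw [Matrix.mulVec_sub, hab, sub_self]
    have hM0 : M.mulVec (a - b) = 0 := by
      have hdot : (M.mulVec (a - b)) ⬝ᵥ (M.mulVec (a - b)) = 0 := by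
        have h1 : (a - b) ⬝ᵥ ((Mᵀ * M).mulVec (a - b)) = 0 := by
          rw [hsub0, dotProduct_zero]
        rwa [← Matrix.mulVec_mulVec, Matrix.dotProduct_mulVec,
          Matrix.vecMul_transpose] at h1
      exact dotProduct_self_eq_zero.mp hdot
    have := hker _ hM0
    exact sub_eq_zero.mp this
  have hunit : IsUnit (Mᵀ * M) := Matrix.mulVec_injective_iff_isUnit.mp hinj
  have hdet : IsUnit (Mᵀ * M).det := (Matrix.isUnit_iff_isUnit_det _).mp hunit
  have hinv : (Mᵀ * M)⁻¹ * (Mᵀ * M) = 1 := Matrix.nonsing_inv_mul _ hdet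
  rw [hMx]
  show x = ((Mᵀ * M)⁻¹ * Mᵀ).mulVec (M.mulVec x)
  rw [Matrix.mulVec_mulVec, Matrix.mul_assoc, hinv, Matrix.one_mulVec]

private lemma resid_eq {Φ : Matrix (Fin p × Fin n) (Fin n) ℝ}
    {x : Fin n → ℝ} {e zhat : Fin p × Fin n → ℝ} (hz : zhat = Φ.mulVec x + e) :
    zhat - Φ.mulVec x = e := by
  rw [hz]; abel

private lemma eq_of_sparse_resid {Φ : Matrix (Fin p × Fin n) (Fin n) ℝ} {q : ℕ}
    (hc : ErrCorrectable Φ q)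
    {x : Fin n → ℝ} {e : Fin p × Fin n → ℝ} (he : Sparse q e)
    {zhat : Fin p × Fin n → ℝ} (hz : zhat = Φ.mulVec x + e)
    {χ : Fin n → ℝ} (hs : l0n (zhat - Φ.mulVec χ) ≤ q) : χ = x := by
  refine (hc x χ e (zhat - Φ.mulVec χ) he hs ?_).symm
  rw [hz]; abel

private lemma card_eq_l0n {Φ : Matrix (Fin p × Fin n) (Fin n) ℝ}
    (zhat : Fin p × Fin n → ℝ) (χ : Fin n → ℝ) :
    (Finset.univ.filter fun i : Fin p =>
      0 < SecureEst.enorm (blk zhat i - (rowBlk Φ i).mulVec χ)).card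
      = l0n (zhat - Φ.mulVec χ) := by
  unfold l0n blockSupp
  congr 1
  apply Finset.filter_congr
  intro i _
  rw [← blk_mulVec]
  have hblk : blk (zhat - Φ.mulVec χ) i = blk zhat i - blk (Φ.mulVec χ) i := rfl
  rw [← hblk]
  set v := blk (zhat - Φ.mulVec χ) i
  constructor
  · intro h hv
    rw [hv] at h
    simp [SecureEst.enorm] at h
  · intro hv
    have hnn : 0 ≤ ∑ j, v j ^ 2 := Finset.sum_nonneg fun j _ => sq_nonneg _
    rcases lt_or_eq_of_le hnn with hlt | heq
    · exact Real.sqrt_pos.mpr hlt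
    · exfalso
      apply hv
      funext j
      have hzero : ∀ j ∈ Finset.univ, v j ^ 2 = 0 := by
        intro j' _
        have := (Finset.sum_eq_zero_iff_of_nonneg (fun j' _ => sq_nonneg (v j'))).mp heq.symm
        exact this j' (Finset.mem_univ _)
      have := hzero j (Finset.mem_univ j)
      exact (pow_eq_zero_iff two_ne_zero).mp this

end Aux

open SecureEst in
/-- Theorem 2: for `zhat = Φx + e` with `q`-error correctable `Φ` and
`q ≤ r ≤ 2q`, the true `x` belongs to the finite set `F_{p,r}(zhat)` and is the unique
minimizer over it of `‖zhat − Φχ‖_{0ⁿ}`, equivalently of the number of blocks `i` with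
`‖zhatᵢ − Φ_{Γᵢⁿ}χ‖₂ > 0`. -/
theorem finite_l0_minimization {n p : ℕ}
    (Φ : Matrix (Fin p × Fin n) (Fin n) ℝ) (q r : ℕ)
    (hc : ErrCorrectable Φ q) (hqr : q ≤ r) (hr2q : r ≤ 2 * q)
    (x : Fin n → ℝ) (e : Fin p × Fin n → ℝ) (he : Sparse q e)
    (zhat : Fin p × Fin n → ℝ) (hz : zhat = Φ.mulVec x + e) :
    x ∈ Fset Φ r zhat ∧
    (∀ χ ∈ Fset Φ r zhat, l0n (zhat - Φ.mulVec x) ≤ l0n (zhat - Φ.mulVec χ)) ∧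
    (∀ χ ∈ Fset Φ r zhat,
      (∀ χ' ∈ Fset Φ r zhat, l0n (zhat - Φ.mulVec χ) ≤ l0n (zhat - Φ.mulVec χ')) → χ = x) ∧
    (∀ χ ∈ Fset Φ r zhat,
      (Finset.univ.filter fun i : Fin p =>
          0 < SecureEst.enorm (blk zhat i - (rowBlk Φ i).mulVec x)).card ≤
        (Finset.univ.filter fun i : Fin p =>
          0 < SecureEst.enorm (blk zhat i - (rowBlk Φ i).mulVec χ)).card) ∧
    (∀ χ ∈ Fset Φ r zhat,
      (∀ χ' ∈ Fset Φ r zhat,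
        (Finset.univ.filter fun i : Fin p =>
            0 < SecureEst.enorm (blk zhat i - (rowBlk Φ i).mulVec χ)).card ≤
          (Finset.univ.filter fun i : Fin p =>
            0 < SecureEst.enorm (blk zhat i - (rowBlk Φ i).mulVec χ')).card) → χ = x) := by
  have hxmem := x_mem_Fset hc hqr hr2q he hz
  have hres : zhat - Φ.mulVec x = e := resid_eq hz
  have hmin : ∀ χ ∈ Fset Φ r zhat,
      l0n (zhat - Φ.mulVec x) ≤ l0n (zhat - Φ.mulVec χ) := by
    intro χ _
    rcases le_or_gt (l0n (zhat - Φ.mulVec χ)) (l0n (zhat - Φ.mulVec x)) with hle | hlt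
    · have hq : l0n (zhat - Φ.mulVec χ) ≤ q := by rw [hres] at hle; exact hle.trans he
      rw [eq_of_sparse_resid hc he hz hq]
    · exact hlt.le
  have huniq : ∀ χ ∈ Fset Φ r zhat,
      (∀ χ' ∈ Fset Φ r zhat, l0n (zhat - Φ.mulVec χ) ≤ l0n (zhat - Φ.mulVec χ')) → χ = x := by
    intro χ _ hχ
    have := hχ x hxmem
    rw [hres] at this
    exact eq_of_sparse_resid hc he hz (this.trans he)
  refine ⟨hxmem, hmin, huniq, ?_, ?_⟩
  · intro χ hχ
    rw [card_eq_l0n, card_eq_l0n]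
    exact hmin χ hχ
  · intro χ hχ hχmin
    refine huniq χ hχ ?_
    intro χ' hχ'
    have := hχmin χ' hχ'
    rwa [card_eq_l0n, card_eq_l0n] at this
end
end

section
/- Let A ∈ ℝ^{n×n} and C ∈ ℝ^{p×n} with rows c₁,…,c_p, and let G ∈ ℝ^{np×n} be the stacked observability matrix whose i-th row-block is G_i = [c_iᵀ (c_iA)ᵀ ⋯ (c_iA^{n−1})ᵀ]ᵀ. Then the pair (A, C) is q-redundant observable if and only if G is (n-stacked) q-error detectable. -/
open scoped Classical
open Finset Matrix

noncomputable section

namespace SecureEst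

variable {n p : ℕ}

lemma rank_eq_iff_ker' {m : Type*} [Fintype m] {n : ℕ} (M : Matrix m (Fin n) ℝ) :
    M.rank = n ↔ ∀ x : Fin n → ℝ, M.mulVec x = 0 → x = 0 := by
  constructor
  · intro h x hx
    have hfr : Module.finrank ℝ (LinearMap.ker M.mulVecLin) = 0 := by
      have := LinearMap.finrank_range_add_finrank_ker M.mulVecLin
      rw [show Module.finrank ℝ (LinearMap.range M.mulVecLin) = M.rank from rfl] at this
      rw [h, Module.finrank_fin_fun] at this
      omega
    have hker : LinearMap.ker M.mulVecLin = ⊥ := Submodule.finrank_eq_zero.mp hfr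
    have hm : x ∈ LinearMap.ker M.mulVecLin := by
      simpa [Matrix.mulVecLin_apply] using hx
    rw [hker] at hm
    simpa using hm
  · intro h
    have hinj : Function.Injective M.mulVecLin := by
      rw [← LinearMap.ker_eq_bot, LinearMap.ker_eq_bot']
      intro x hx
      exact h x (by simpa [Matrix.mulVecLin_apply] using hx)
    have := LinearMap.finrank_range_of_inj hinj
    simpa [Matrix.rank, Module.finrank_fin_fun] using this

lemma obsG_zeroRows' (A : Matrix (Fin n) (Fin n) ℝ) (C : Matrix (Fin p) (Fin n) ℝ)
    (Λ : Finset (Fin p)) : obsG A (zeroRows Λ C) = zeroB Λ (obsG A C) := by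
  funext ij k
  simp only [obsG, zeroB, zeroRows, Matrix.mul_apply]
  by_cases h : ij.1 ∈ Λ <;> simp [h]

lemma zeroB_mulVec' (Λ : Finset (Fin p)) (Φ : Matrix (Fin p × Fin n) (Fin n) ℝ)
    (d : Fin n → ℝ) (ij : Fin p × Fin n) :
    (zeroB Λ Φ).mulVec d ij = if ij.1 ∈ Λ then Φ.mulVec d ij else 0 := by
  simp only [zeroB, Matrix.mulVec, dotProduct]
  by_cases h : ij.1 ∈ Λ <;> simp [h]

end SecureEst
open SecureEst in
/-- Proposition 3: the pair `(A, C)` is `q`-redundant observable iff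
the stacked observability matrix `G` is `(n-stacked) q`-error detectable. -/
theorem redObservable_iff_errDetectable {n p : ℕ}
    (A : Matrix (Fin n) (Fin n) ℝ) (C : Matrix (Fin p) (Fin n) ℝ) (q : ℕ) :
    RedObservable A C q ↔ ErrDetectable (obsG A C) q := by
  constructor
  · intro hRO x x' e he heq
    set G := obsG A C with hG
    have hGd : G.mulVec (x' - x) = e := by
      rw [Matrix.mulVec_sub, ← heq]
      abel
    set Λ : Finset (Fin p) := (blockSupp e)ᶜ with hΛdef
    have hcard : p - q ≤ Λ.card := by
      have h1 : Λ.card = p - (blockSupp e).card := by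
        simp [hΛdef, Finset.card_compl]
      have h2 : (blockSupp e).card ≤ q := he
      omega
    have hobs := hRO Λ hcard
    rw [Observable, obsG_zeroRows'] at hobs
    have hz : (zeroB Λ G).mulVec (x' - x) = 0 := by
      funext ij
      rw [zeroB_mulVec', hGd]
      by_cases h : ij.1 ∈ Λ
      · simp only [h, if_true]
        have : blk e ij.1 = 0 := by
          by_contra hne
          have : ij.1 ∈ blockSupp e := by
            simp [blockSupp, hne]
          exact (Finset.mem_compl.mp (hΛdef ▸ h)) this
        have := congrFun this ij.2
        simpa [blk] using this
      · simp [h]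
    have := (rank_eq_iff_ker' _).mp hobs (x' - x) hz
    have : x' = x := by
      have := sub_eq_zero.mp this
      exact this
    exact this.symm
  · intro hED Λ hΛ
    rw [Observable, obsG_zeroRows']
    rw [rank_eq_iff_ker']
    intro d hd
    set G := obsG A C with hG
    set e : Fin p × Fin n → ℝ := G.mulVec d with hedef
    have hsupp : blockSupp e ⊆ Λᶜ := by
      intro i hi
      rw [Finset.mem_compl]
      intro hiΛ
      have hne : blk e i ≠ 0 := by
        have := Finset.mem_filter.mp hi
        exact this.2
      apply hne
      funext j
      have := congrFun hd (i, j)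
      rw [zeroB_mulVec'] at this
      simpa [blk, hiΛ, hedef] using this
    have hsparse : Sparse q e := by
      have h1 : (blockSupp e).card ≤ Λᶜ.card := Finset.card_le_card hsupp
      have h2 : Λᶜ.card = p - Λ.card := by simp [Finset.card_compl]
      have h3 : Λ.card ≤ p := by
        have := Finset.card_le_card (Finset.subset_univ Λ)
        simpa using this
      have : (blockSupp e).card ≤ q := by omega
      exact this
    have h0 : G.mulVec 0 + e = G.mulVec d := by
      simp [hedef]
    exact (hED 0 d e hsparse h0).symm
end
end

section
/- Let A ∈ ℝ^{n×n} and C ∈ ℝ^{p×n} with rows c₁,…,c_p, and let G ∈ ℝ^{np×n} be the stacked observability matrix with row-blocks G_i = [c_iᵀ (c_iA)ᵀ ⋯ (c_iA^{n−1})ᵀ]ᵀ. Then the dynamic security index satisfies α_d(A, C) = min over normalized complex eigenvectors v ∈ V(A) of ‖Cv‖₀ = min over nonzero x ∈ ℝⁿ of ‖Gx‖_{0ⁿ} = cospark^n(G). -/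
open scoped Classical
open Finset Matrix

noncomputable section

namespace AlphaAux

open SecureEst

variable {n p : ℕ}

lemma map_pow_ofReal (A : Matrix (Fin n) (Fin n) ℝ) (j : ℕ) :
    (A.map Complex.ofReal) ^ j = (A ^ j).map Complex.ofReal := by
  have h1 : A.map Complex.ofReal = Complex.ofRealHom.mapMatrix A := rfl
  have h2 : (A ^ j).map Complex.ofReal = Complex.ofRealHom.mapMatrix (A ^ j) := rfl
  rw [h1, h2, map_pow]

lemma map_mul_ofReal {m k o : Type*} [Fintype k] (L : Matrix m k ℝ) (M : Matrix k o ℝ) :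
    (L * M).map Complex.ofReal = L.map Complex.ofReal * M.map Complex.ofReal := by
  ext i j
  simp [Matrix.map_apply, Matrix.mul_apply]

lemma mulVec_map_ofReal {m k : Type*} [Fintype k] (M : Matrix m k ℝ) (x : k → ℝ) (i : m) :
    (M.map Complex.ofReal).mulVec (fun j => (x j : ℂ)) i = ((M.mulVec x i : ℝ) : ℂ) := by
  simp [Matrix.mulVec, dotProduct, Matrix.map_apply]

lemma re_mulVec_map {m k : Type*} [Fintype k] (M : Matrix m k ℝ) (v : k → ℂ) (i : m) :
    ((M.map Complex.ofReal).mulVec v i).re = M.mulVec (fun j => (v j).re) i := by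
  simp [Matrix.mulVec, dotProduct, Matrix.map_apply, Complex.re_sum]

lemma im_mulVec_map {m k : Type*} [Fintype k] (M : Matrix m k ℝ) (v : k → ℂ) (i : m) :
    ((M.map Complex.ofReal).mulVec v i).im = M.mulVec (fun j => (v j).im) i := by
  simp [Matrix.mulVec, dotProduct, Matrix.map_apply, Complex.im_sum]

lemma sum_mulVec {ι : Type*} (s : Finset ι) {m k : Type*} [Fintype k]
    (M : ι → Matrix m k ℂ) (v : k → ℂ) :
    (∑ i ∈ s, M i).mulVec v = ∑ i ∈ s, (M i).mulVec v := by
  ext j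
  simp [Matrix.mulVec, dotProduct, Matrix.sum_apply, Finset.sum_mul, Finset.sum_apply]
  rw [Finset.sum_comm]

lemma pow_mulVec_eig {A : Matrix (Fin n) (Fin n) ℝ} {μ : ℂ} {v : Fin n → ℂ}
    (h : (A.map Complex.ofReal).mulVec v = μ • v) (j : ℕ) :
    ((A.map Complex.ofReal) ^ j).mulVec v = μ ^ j • v := by
  induction j with
  | zero => simp [Matrix.one_mulVec]
  | succ j ih =>
    rw [pow_succ, ← Matrix.mulVec_mulVec, h, Matrix.mulVec_smul, ih, smul_smul, ← pow_succ']

lemma enormC_smul_real (r : ℝ) (hr : 0 ≤ r) {m : Type*} [Fintype m] (v : m → ℂ) :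
    enormC ((r : ℂ) • v) = r * enormC v := by
  unfold enormC
  have h : ∑ i, ‖((r : ℂ) • v) i‖ ^ 2 = r ^ 2 * ∑ i, ‖v i‖ ^ 2 := by
    rw [Finset.mul_sum]
    refine Finset.sum_congr rfl fun i _ => ?_
    simp [Pi.smul_apply, norm_mul, Complex.norm_real, abs_of_nonneg hr, mul_pow]
  rw [h, Real.sqrt_mul (sq_nonneg r), Real.sqrt_sq hr]

lemma enormC_pos {m : Type*} [Fintype m] {v : m → ℂ} (hv : v ≠ 0) :
    0 < enormC v := by
  unfold enormC
  rw [Real.sqrt_pos]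
  obtain ⟨i, hi⟩ : ∃ i, v i ≠ 0 := by
    by_contra h
    push_neg at h
    exact hv (funext h)
  exact Finset.sum_pos' (fun j _ => sq_nonneg _)
    ⟨i, Finset.mem_univ i, pow_pos (norm_pos_iff.mpr hi) 2⟩

lemma ne_zero_of_enormC_one {m : Type*} [Fintype m] {v : m → ℂ}
    (hv : enormC v = 1) : v ≠ 0 := by
  rintro rfl
  simp [enormC] at hv

lemma sInf_eq_of_dominates {S1 S2 : Set ℕ}
    (h1 : ∀ m ∈ S1, ∃ m' ∈ S2, m' ≤ m) (h2 : ∀ m ∈ S2, ∃ m' ∈ S1, m' ≤ m) :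
    sInf S1 = sInf S2 := by
  rcases Set.eq_empty_or_nonempty S1 with hS1 | hS1
  · rcases Set.eq_empty_or_nonempty S2 with hS2 | hS2
    · rw [hS1, hS2]
    · obtain ⟨m, hm⟩ := hS2
      obtain ⟨m', hm', _⟩ := h2 m hm
      rw [hS1] at hm'
      exact absurd hm' (Set.notMem_empty _)
  · have hS2 : S2.Nonempty := by
      obtain ⟨m, hm⟩ := hS1
      obtain ⟨m', hm', _⟩ := h1 m hm
      exact ⟨m', hm'⟩
    apply le_antisymm
    · obtain ⟨m', hm', hle⟩ := h2 _ (Nat.sInf_mem hS2)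
      exact le_trans (Nat.sInf_le hm') hle
    · obtain ⟨m', hm', hle⟩ := h1 _ (Nat.sInf_mem hS1)
      exact le_trans (Nat.sInf_le hm') hle

/-- Existence of an eigenvector inside the (complexified) Krylov subspace of `x`. -/
lemma exists_eigvec_in_krylov (A : Matrix (Fin n) (Fin n) ℝ) (x : Fin n → ℝ) (hx : x ≠ 0) :
    ∃ v : Fin n → ℂ, v ≠ 0 ∧ (∃ μ : ℂ, (A.map Complex.ofReal).mulVec v = μ • v) ∧
      v ∈ Submodule.span ℂ (Set.range fun j : Fin n =>
        ((A.map Complex.ofReal) ^ (j : ℕ)).mulVec (fun k => (x k : ℂ))) := by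
  set Ac := A.map Complex.ofReal with hAc
  set xc : Fin n → ℂ := fun k => (x k : ℂ) with hxcdef
  have hxc : xc ≠ 0 := by
    intro h
    apply hx
    funext k
    have hk := congrFun h k
    simpa [hxcdef] using hk
  have hn : 0 < n := by
    rcases Nat.eq_zero_or_pos n with h | h
    · exfalso; apply hx; subst h; funext k; exact absurd k.2 (Nat.not_lt_zero _)
    · exact h
  set W := Submodule.span ℂ (Set.range fun j : Fin n => (Ac ^ (j : ℕ)).mulVec xc) with hW
  have hCH : Ac ^ n = -∑ i ∈ Finset.range n, Ac.charpoly.coeff i • Ac ^ i := by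
    have h0 := Matrix.aeval_self_charpoly Ac
    rw [Polynomial.aeval_eq_sum_range] at h0
    rw [Matrix.charpoly_natDegree_eq_dim, Fintype.card_fin, Finset.sum_range_succ] at h0
    have hcn : Ac.charpoly.coeff n = 1 := by
      have h1 := (Matrix.charpoly_monic Ac).coeff_natDegree
      rwa [Matrix.charpoly_natDegree_eq_dim, Fintype.card_fin] at h1
    rw [hcn, one_smul] at h0
    exact eq_neg_of_add_eq_zero_right h0
  have hgen : ∀ k : ℕ, k < n → (Ac ^ k).mulVec xc ∈ W := by
    intro k hk
    exact Submodule.subset_span ⟨⟨k, hk⟩, rfl⟩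
  have hinv : ∀ y ∈ W, Ac.mulVec y ∈ W := by
    intro y hy
    refine Submodule.span_induction (fun z hz => ?_) (by simp)
      (fun a b _ _ ha hb => by rw [Matrix.mulVec_add]; exact W.add_mem ha hb)
      (fun c a _ ha => by rw [Matrix.mulVec_smul]; exact W.smul_mem c ha) hy
    obtain ⟨j, rfl⟩ := hz
    rw [Matrix.mulVec_mulVec, ← pow_succ']
    rcases Nat.lt_or_ge ((j : ℕ) + 1) n with h | h
    · exact hgen _ h
    · have hj : (j : ℕ) + 1 = n := le_antisymm (Nat.succ_le_of_lt j.2) h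
      rw [hj, hCH, Matrix.neg_mulVec, sum_mulVec]
      have hrw : ∀ i ∈ Finset.range n,
          (Ac.charpoly.coeff i • Ac ^ i).mulVec xc = Ac.charpoly.coeff i • (Ac ^ i).mulVec xc :=
        fun i _ => by rw [Matrix.smul_mulVec]
      rw [Finset.sum_congr rfl hrw]
      refine W.neg_mem (Submodule.sum_mem W fun i hi => ?_)
      exact W.smul_mem _ (hgen i (Finset.mem_range.mp hi))
  have hxW : xc ∈ W := by
    have h0 : (Ac ^ (0 : ℕ)).mulVec xc ∈ W := hgen 0 hn
    simpa [Matrix.one_mulVec] using h0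
  set f : Module.End ℂ (Fin n → ℂ) := Ac.mulVecLin with hf
  have hinv' : ∀ y ∈ W, f y ∈ W := fun y hy => by
    simpa [hf, Matrix.mulVecLin_apply] using hinv y hy
  haveI : Nontrivial W := by
    refine nontrivial_of_ne (⟨xc, hxW⟩ : W) 0 ?_
    intro h
    exact hxc (by simpa [Subtype.ext_iff] using h)
  obtain ⟨μ, hμ⟩ := Module.End.exists_eigenvalue (f.restrict hinv')
  obtain ⟨v, hv⟩ := hμ.exists_hasEigenvector
  have happ : f v.val = μ • v.val := by
    have h1 := hv.apply_eq_smul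
    have h2 := congrArg Subtype.val h1
    rw [LinearMap.restrict_coe_apply] at h2
    exact h2
  refine ⟨v.val, ?_, ⟨μ, happ⟩, v.2⟩
  intro h
  exact hv.2 (Subtype.ext h)

lemma stepB (A : Matrix (Fin n) (Fin n) ℝ) (C : Matrix (Fin p) (Fin n) ℝ)
    (x : Fin n → ℝ) (hx : x ≠ 0) :
    ∃ v ∈ eigSet A,
      l0C ((C.map Complex.ofReal).mulVec v) ≤ l0n ((obsG A C).mulVec x) := by
  obtain ⟨v, hv0, ⟨μ, hμ⟩, hvW⟩ := exists_eigvec_in_krylov A x hx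
  set r := enormC v with hr
  have hrpos : 0 < r := enormC_pos hv0
  set v' : Fin n → ℂ := ((r⁻¹ : ℝ) : ℂ) • v with hv'
  have hvC : ∀ i : Fin p, blk ((obsG A C).mulVec x) i = 0 →
      (C.map Complex.ofReal).mulVec v i = 0 := by
    intro i hi
    have hker : ∀ j : Fin n, (C.map Complex.ofReal).mulVec
        (((A.map Complex.ofReal) ^ (j : ℕ)).mulVec (fun k => (x k : ℂ))) i = 0 := by
      intro j
      have h3 : ((C * A ^ (j : ℕ)).mulVec x) i = 0 := by
        have h2 : blk ((obsG A C).mulVec x) i j = 0 := by rw [hi]; rfl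
        exact h2
      calc (C.map Complex.ofReal).mulVec
            (((A.map Complex.ofReal) ^ (j : ℕ)).mulVec (fun k => (x k : ℂ))) i
          = ((C.map Complex.ofReal) * (A.map Complex.ofReal) ^ (j : ℕ)).mulVec
              (fun k => (x k : ℂ)) i := by rw [Matrix.mulVec_mulVec]
        _ = ((C * A ^ (j : ℕ)).map Complex.ofReal).mulVec (fun k => (x k : ℂ)) i := by
              rw [map_pow_ofReal, map_mul_ofReal]
        _ = (((C * A ^ (j : ℕ)).mulVec x i : ℝ) : ℂ) := mulVec_map_ofReal _ _ _
        _ = 0 := by rw [h3]; simp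
    have hle : Submodule.span ℂ (Set.range fun j : Fin n =>
        ((A.map Complex.ofReal) ^ (j : ℕ)).mulVec (fun k => (x k : ℂ))) ≤
        LinearMap.ker ((LinearMap.proj i : ((Fin p) → ℂ) →ₗ[ℂ] ℂ) ∘ₗ
          (C.map Complex.ofReal).mulVecLin) := by
      rw [Submodule.span_le]
      rintro z ⟨j, rfl⟩
      simp only [SetLike.mem_coe, LinearMap.mem_ker, LinearMap.comp_apply,
        LinearMap.proj_apply, Matrix.mulVecLin_apply]
      exact hker j
    have hv2 := hle hvW
    simpa [LinearMap.mem_ker, LinearMap.comp_apply, LinearMap.proj_apply,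
      Matrix.mulVecLin_apply] using hv2
  have hmem : v' ∈ eigSet A := by
    constructor
    · exact ⟨μ, by rw [hv', Matrix.mulVec_smul, hμ, smul_comm]⟩
    · rw [hv', enormC_smul_real _ (inv_nonneg.mpr hrpos.le), ← hr,
        inv_mul_cancel₀ hrpos.ne']
  refine ⟨v', hmem, ?_⟩
  unfold l0C l0n blockSupp
  apply Finset.card_le_card
  intro i hi
  simp only [Finset.mem_filter, Finset.mem_univ, true_and] at hi ⊢
  intro h0
  apply hi
  have hsc : (C.map Complex.ofReal).mulVec v' i
      = ((r⁻¹ : ℝ) : ℂ) * (C.map Complex.ofReal).mulVec v i := by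
    rw [hv', Matrix.mulVec_smul]; rfl
  rw [hsc, hvC i h0, mul_zero]

lemma stepA (A : Matrix (Fin n) (Fin n) ℝ) (C : Matrix (Fin p) (Fin n) ℝ)
    (v : Fin n → ℂ) (hv : v ∈ eigSet A) :
    ∃ x : Fin n → ℝ, x ≠ 0 ∧
      l0n ((obsG A C).mulVec x) ≤ l0C ((C.map Complex.ofReal).mulVec v) := by
  obtain ⟨⟨μ, hμ⟩, hnorm⟩ := hv
  have hv0 : v ≠ 0 := ne_zero_of_enormC_one hnorm
  set a : Fin n → ℝ := fun k => (v k).re with ha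
  set b : Fin n → ℝ := fun k => (v k).im with hb
  have hab : a ≠ 0 ∨ b ≠ 0 := by
    by_contra h
    push_neg at h
    apply hv0
    funext k
    have h1 := congrFun h.1 k
    have h2 := congrFun h.2 k
    exact Complex.ext (by simpa [ha] using h1) (by simpa [hb] using h2)
  have key : ∀ (i : Fin p), (C.map Complex.ofReal).mulVec v i = 0 →
      ∀ j : Fin n, ((C * A ^ (j : ℕ)).mulVec a) i = 0 ∧ ((C * A ^ (j : ℕ)).mulVec b) i = 0 := by
    intro i hi j
    have h1 : ((C * A ^ (j : ℕ)).map Complex.ofReal).mulVec v i = 0 := by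
      rw [map_mul_ofReal, ← map_pow_ofReal, ← Matrix.mulVec_mulVec,
        pow_mulVec_eig hμ, Matrix.mulVec_smul]
      simp [Pi.smul_apply, hi]
    constructor
    · have h2 := re_mulVec_map (C * A ^ (j : ℕ)) v i
      rw [h1] at h2
      exact h2.symm
    · have h2 := im_mulVec_map (C * A ^ (j : ℕ)) v i
      rw [h1] at h2
      exact h2.symm
  have main : ∀ (x : Fin n → ℝ),
      (∀ i, (C.map Complex.ofReal).mulVec v i = 0 → ∀ j : Fin n, ((C * A ^ (j : ℕ)).mulVec x) i = 0) →
      l0n ((obsG A C).mulVec x) ≤ l0C ((C.map Complex.ofReal).mulVec v) := by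
    intro x hx0
    unfold l0n blockSupp l0C
    apply Finset.card_le_card
    intro i hi
    simp only [Finset.mem_filter, Finset.mem_univ, true_and] at hi ⊢
    intro h0
    apply hi
    funext j
    exact hx0 i h0 j
  rcases hab with h | h
  · exact ⟨a, h, main a (fun i hi j => (key i hi j).1)⟩
  · exact ⟨b, h, main b (fun i hi j => (key i hi j).2)⟩

end AlphaAux

open SecureEst in
/-- Proposition 5: the dynamic security index equals the minimum of
`‖Gx‖_{0ⁿ}` over nonzero real `x`, i.e. the `n`-stacked cospark of `G`. -/
theorem alphaD_eq_cosparkN {n p : ℕ}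
    (A : Matrix (Fin n) (Fin n) ℝ) (C : Matrix (Fin p) (Fin n) ℝ) :
    alphaD A C =
        sInf {m : ℕ | ∃ x : Fin n → ℝ, x ≠ 0 ∧ m = l0n ((obsG A C).mulVec x)} ∧
      alphaD A C = cosparkN (obsG A C) := by
  have key : alphaD A C =
      sInf {m : ℕ | ∃ x : Fin n → ℝ, x ≠ 0 ∧ m = l0n ((obsG A C).mulVec x)} := by
    apply AlphaAux.sInf_eq_of_dominates
    · rintro m ⟨v, hv, rfl⟩
      obtain ⟨x, hx, hle⟩ := AlphaAux.stepA A C v hv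
      exact ⟨_, ⟨x, hx, rfl⟩, hle⟩
    · rintro m ⟨x, hx, rfl⟩
      obtain ⟨v, hv, hle⟩ := AlphaAux.stepB A C x hx
      exact ⟨_, ⟨v, hv, rfl⟩, hle⟩
  exact ⟨key, key⟩
end
end

section
/- Let G ∈ ℝ^{np×n} be a real matrix viewed in p row-blocks. Then the minimum of ‖Gx‖_{0ⁿ} over nonzero x ∈ ℂⁿ equals the minimum of ‖Gx‖_{0ⁿ} over nonzero x ∈ ℝⁿ; that is, extending the stacked cospark minimization from real to complex vectors does not change its value. -/
open scoped Classical
open Finset Matrix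

noncomputable section

open SecureEst in
/-- the `n`-stacked cospark minimization of a real matrix `G` over
nonzero complex vectors has the same value as over nonzero real vectors. -/
theorem complex_cospark_eq_real_cospark {n p : ℕ}
    (G : Matrix (Fin p × Fin n) (Fin n) ℝ) :
    sInf {m : ℕ | ∃ x : Fin n → ℂ, x ≠ 0 ∧
        m = l0nC ((G.map Complex.ofReal).mulVec x)} =
      sInf {m : ℕ | ∃ x : Fin n → ℝ, x ≠ 0 ∧ m = l0n (G.mulVec x)} := by
  set R := {m : ℕ | ∃ x : Fin n → ℝ, x ≠ 0 ∧ m = l0n (G.mulVec x)} with hRdef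
  set Cset := {m : ℕ | ∃ x : Fin n → ℂ, x ≠ 0 ∧
      m = l0nC ((G.map Complex.ofReal).mulVec x)} with hCdef
  -- pointwise formulas
  have hpt : ∀ (x : Fin n → ℂ) (i : Fin p) (j : Fin n),
      ((G.map Complex.ofReal).mulVec x) (i, j)
        = Complex.ofReal ((G.mulVec fun k => (x k).re) (i, j))
          + Complex.ofReal ((G.mulVec fun k => (x k).im) (i, j)) * Complex.I := by
    intro x i j
    simp only [Matrix.mulVec, dotProduct, Matrix.map_apply]
    push_cast
    rw [Finset.sum_mul, ← Finset.sum_add_distrib]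
    apply Finset.sum_congr rfl
    intro k _
    rw [mul_assoc, ← mul_add, Complex.re_add_im]
  -- real vectors embed with equal value
  have hRC : ∀ m ∈ R, m ∈ Cset := by
    rintro m ⟨x, hx, rfl⟩
    refine ⟨fun k => (x k : ℂ), ?_, ?_⟩
    · intro h
      apply hx
      funext k
      have := congrFun h k
      simpa using this
    · unfold l0nC l0n blockSupp
      congr 1
      apply Finset.filter_congr
      intro i _
      have h1 : ∀ j, ((G.map Complex.ofReal).mulVec (fun k => ((x k : ℂ)))) (i, j)
          = Complex.ofReal ((G.mulVec x) (i, j)) := by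
        intro j
        simp only [Matrix.mulVec, dotProduct, Matrix.map_apply]
        push_cast
        rfl
      simp only [ne_eq, eq_iff_iff]
      constructor
      · intro h h'
        apply h
        funext j
        have := congrFun h' j
        rw [h1 j] at this
        simpa [blk] using this
      · intro h h'
        apply h
        funext j
        rw [h1 j]
        have := congrFun h' j
        simp only [blk, Pi.zero_apply] at this
        rw [this]; simp
  -- complex vectors dominate some real value
  have hCR : ∀ m ∈ Cset, ∃ m' ∈ R, m' ≤ m := by
    rintro m ⟨x, hx, rfl⟩
    -- the block support of G·Re(x) and G·Im(x) are contained in that of Gᶜ·x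
    have hle : ∀ y : Fin n → ℝ,
        (∀ i : Fin p, blk (G.mulVec y) i ≠ 0 →
          (fun j => ((G.map Complex.ofReal).mulVec x) (i, j)) ≠ (0 : Fin n → ℂ)) →
        l0n (G.mulVec y) ≤ l0nC ((G.map Complex.ofReal).mulVec x) := by
      intro y hy
      unfold l0n l0nC blockSupp
      apply Finset.card_le_card
      intro i hi
      simp only [Finset.mem_filter, Finset.mem_univ, true_and] at hi ⊢
      exact hy i hi
    have hre : ∀ i : Fin p, blk (G.mulVec fun k => (x k).re) i ≠ 0 →
        (fun j => ((G.map Complex.ofReal).mulVec x) (i, j)) ≠ (0 : Fin n → ℂ) := by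
      intro i h h'
      apply h
      funext j
      have := congrFun h' j
      simp only [Pi.zero_apply] at this
      rw [hpt x i j] at this
      have h2 := congrArg Complex.re this
      simpa [blk] using h2
    have him : ∀ i : Fin p, blk (G.mulVec fun k => (x k).im) i ≠ 0 →
        (fun j => ((G.map Complex.ofReal).mulVec x) (i, j)) ≠ (0 : Fin n → ℂ) := by
      intro i h h'
      apply h
      funext j
      have := congrFun h' j
      simp only [Pi.zero_apply] at this
      rw [hpt x i j] at this
      have h2 := congrArg Complex.im this
      simpa [blk] using h2
    by_cases hxr : (fun k => (x k).re) ≠ (0 : Fin n → ℝ)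
    · exact ⟨l0n (G.mulVec fun k => (x k).re), ⟨_, hxr, rfl⟩, hle _ hre⟩
    · push_neg at hxr
      have hxi : (fun k => (x k).im) ≠ (0 : Fin n → ℝ) := by
        intro h
        apply hx
        funext k
        have h1 := congrFun hxr k
        have h2 := congrFun h k
        simp only [Pi.zero_apply] at h1 h2
        exact Complex.ext h1 h2
      exact ⟨l0n (G.mulVec fun k => (x k).im), ⟨_, hxi, rfl⟩, hle _ him⟩
  apply le_antisymm
  · rcases Set.eq_empty_or_nonempty R with hRe | hRne
    · have hCe : Cset = ∅ := by
        rw [Set.eq_empty_iff_forall_notMem]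
        intro m hm
        obtain ⟨m', hm', _⟩ := hCR m hm
        rw [hRe] at hm'
        exact hm'
      rw [hRe, hCe]
    · have := Nat.sInf_mem hRne
      exact Nat.sInf_le (hRC _ this)
  · rcases Set.eq_empty_or_nonempty Cset with hCe | hCne
    · have hRe : R = ∅ := by
        rw [Set.eq_empty_iff_forall_notMem]
        intro m hm
        rw [Set.eq_empty_iff_forall_notMem] at hCe
        exact hCe m (hRC m hm)
      rw [hRe, hCe]
    · obtain ⟨m', hm', hle'⟩ := hCR _ (Nat.sInf_mem hCne)
      exact le_trans (Nat.sInf_le hm') hle'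
end
end
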